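/- For 0 < p < 1, let k be the integer with 1/(k+1) < p ≤ 1/k. If S̄_k is the average of k iid Bernoulli(p) random variables, then P(S̄_k ≥ p) = 1 - (1-p)^k > 1/2. Consequently π(p,p) > 1/2. -/

import Mathlib

open MeasureTheory ProbabilityTheory

/-- **Lower bound on `π(p,p)` via bold play.** For `0 < p < 1`, let `k` be the integer
with `1/(k+1) < p ≤ 1/k`. The average `S̄_k` of `k` iid Bernoulli(p) random variables
satisfies `P(S̄_k ≥ p) = 1 - (1-p)^k > 1/2`; consequently `π(p,p) > 1/2`. -/
theorem pi_diagonal_gt_half {Ω : Type*} [MeasurableSpace Ω]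
    (μ : Measure Ω) [IsProbabilityMeasure μ] (p : ℝ) (hp0 : 0 < p) (hp1 : p < 1)
    (β : ℕ → Ω → ℝ) (hmeas : ∀ i, Measurable (β i))
    (hval : ∀ i ω, β i ω = 0 ∨ β i ω = 1)
    (hβp : ∀ i, μ {ω | β i ω = 1} = ENNReal.ofReal p)
    (hindep : iIndepFun β μ)
    (k : ℕ) (hk : 0 < k) (hkp : 1 / (k + 1 : ℝ) < p) (hpk : p ≤ 1 / (k : ℝ)) :
    (μ {ω | p ≤ (∑ i ∈ Finset.range k, β i ω) / k}).toReal = 1 - (1 - p) ^ k ∧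
    1 / 2 < 1 - (1 - p) ^ k ∧
    1 / 2 < sSup {r : ℝ | ∃ c : ℕ → ℝ, (∀ i, 0 ≤ c i) ∧ (∑' i, c i) = 1 ∧
        r = (μ {ω | p ≤ ∑' i, c i * β i ω}).toReal} := by
  have hkpos : (0:ℝ) < k := by exact_mod_cast hk
  -- pointwise characterization of the event
  have hset : {ω | p ≤ (∑ i ∈ Finset.range k, β i ω) / k}
      = (⋂ i ∈ Finset.range k, {ω | β i ω = 0})ᶜ := by
    ext ω
    simp only [Set.mem_setOf_eq, Set.mem_compl_iff, Set.mem_iInter]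
    constructor
    · intro h hall
      have hz : ∑ i ∈ Finset.range k, β i ω = 0 :=
        Finset.sum_eq_zero fun i hi => hall i hi
      rw [hz, zero_div] at h
      linarith
    · intro h
      push_neg at h
      obtain ⟨j, hj, hj0⟩ := h
      have hj1 : β j ω = 1 := (hval j ω).resolve_left hj0
      have hsum : (1:ℝ) ≤ ∑ i ∈ Finset.range k, β i ω := by
        have h := Finset.single_le_sum (f := fun i => β i ω)
          (fun i _ => by rcases hval i ω with h|h <;> simp [h]) hj
        simpa [hj1] using h
      calc p ≤ 1 / k := hpk
        _ ≤ (∑ i ∈ Finset.range k, β i ω) / k := by gcongr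
  -- measure of each {β i = 0}
  have hmeas1 : ∀ i, MeasurableSet {ω | β i ω = 1} := fun i =>
    (hmeas i) (measurableSet_singleton 1)
  have hcompl : ∀ i, ({ω | β i ω = 0} : Set Ω) = {ω | β i ω = 1}ᶜ := by
    intro i; ext ω
    simp only [Set.mem_setOf_eq, Set.mem_compl_iff]
    rcases hval i ω with h|h <;> simp [h]
  have hμ0 : ∀ i, μ {ω | β i ω = 0} = ENNReal.ofReal (1 - p) := by
    intro i
    rw [hcompl i, measure_compl (hmeas1 i) (measure_ne_top μ _), hβp i,
      measure_univ, ← ENNReal.ofReal_one, ← ENNReal.ofReal_sub _ hp0.le]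
  -- independence: measure of intersection
  have hμinter : μ (⋂ i ∈ Finset.range k, {ω | β i ω = 0})
      = ENNReal.ofReal ((1 - p) ^ k) := by
    rw [hindep.meas_biInter (S := Finset.range k) (s := fun i => {ω | β i ω = 0})
      (fun i _ => ⟨{0}, measurableSet_singleton 0, rfl⟩)]
    rw [Finset.prod_congr rfl (fun i _ => hμ0 i), Finset.prod_const, Finset.card_range,
      ← ENNReal.ofReal_pow (by linarith)]
  have h1p : (0:ℝ) ≤ (1 - p) ^ k := pow_nonneg (by linarith) k
  have h1plt : (1 - p) ^ k ≤ 1 := pow_le_one₀ (by linarith) (by linarith)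
  have hμevent : μ {ω | p ≤ (∑ i ∈ Finset.range k, β i ω) / k}
      = 1 - ENNReal.ofReal ((1 - p) ^ k) := by
    rw [hset, measure_compl ?_ (measure_ne_top μ _), measure_univ, hμinter]
    exact Finset.measurableSet_biInter _ fun i _ => (hmeas i) (measurableSet_singleton 0)
  have hofle : ENNReal.ofReal ((1 - p) ^ k) ≤ 1 := by
    rw [← ENNReal.ofReal_one]; exact ENNReal.ofReal_le_ofReal h1plt
  have hfirst : (μ {ω | p ≤ (∑ i ∈ Finset.range k, β i ω) / k}).toReal
      = 1 - (1 - p) ^ k := by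
    rw [hμevent, ENNReal.toReal_sub_of_le hofle ENNReal.one_ne_top,
      ENNReal.toReal_one, ENNReal.toReal_ofReal h1p]
  -- second part: (1-p)^k < 1/2
  have hsecond : 1 / 2 < 1 - (1 - p) ^ k := by
    have hq : 1 - p < (k:ℝ) / (k + 1) := by
      have : 1 / ((k:ℝ) + 1) < p := hkp
      have hk1 : (0:ℝ) < (k:ℝ) + 1 := by positivity
      rw [lt_div_iff₀ hk1]
      rw [div_lt_iff₀ hk1] at this
      nlinarith
    have hqk : (1 - p) ^ k < ((k:ℝ) / (k + 1)) ^ k := by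
      exact pow_lt_pow_left₀ hq (by linarith) hk.ne'
    have hber : (2:ℝ) ≤ (1 + 1 / k) ^ k := by
      have h0 : (0:ℝ) ≤ 1 / k := by positivity
      have := one_add_mul_le_pow (a := 1 / (k:ℝ)) (by linarith) k
      have hkk : (k:ℝ) * (1 / k) = 1 := by field_simp
      nlinarith
    have hhalf : ((k:ℝ) / (k + 1)) ^ k ≤ 1 / 2 := by
      have heq : ((k:ℝ) / (k + 1)) ^ k * (1 + 1 / k) ^ k = 1 := by
        rw [← mul_pow]
        have : (k:ℝ) / (k + 1) * (1 + 1 / k) = 1 := by field_simp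
        rw [this, one_pow]
      have hpos : (0:ℝ) < ((k:ℝ) / (k + 1)) ^ k := by positivity
      nlinarith
    linarith
  refine ⟨hfirst, hsecond, ?_⟩
  -- third part
  set S := {r : ℝ | ∃ c : ℕ → ℝ, (∀ i, 0 ≤ c i) ∧ (∑' i, c i) = 1 ∧
      r = (μ {ω | p ≤ ∑' i, c i * β i ω}).toReal} with hS
  have hbdd : BddAbove S := by
    refine ⟨1, fun r hr => ?_⟩
    obtain ⟨c, _, _, hr⟩ := hr
    rw [hr]
    exact ENNReal.toReal_le_of_le_ofReal one_pos.le (by simpa using prob_le_one)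
  have hmem : (1 - (1 - p) ^ k) ∈ S := by
    refine ⟨fun i => if i < k then 1 / k else 0, fun i => ?_, ?_, ?_⟩
    · dsimp only
      by_cases h : i < k
      · rw [if_pos h]; positivity
      · rw [if_neg h]
    · rw [tsum_eq_sum (s := Finset.range k) (fun i hi => if_neg (by simpa using hi)),
        Finset.sum_congr rfl (fun i hi => if_pos (Finset.mem_range.mp hi)),
        Finset.sum_const, Finset.card_range]
      rw [nsmul_eq_mul, mul_one_div_cancel hkpos.ne']
    · have : ∀ ω, (∑' i, (if i < k then 1 / (k:ℝ) else 0) * β i ω)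
          = (∑ i ∈ Finset.range k, β i ω) / k := by
        intro ω
        rw [tsum_eq_sum (s := Finset.range k) (fun i hi => by
          rw [if_neg (by simpa using hi), zero_mul]),
          Finset.sum_div]
        exact Finset.sum_congr rfl fun i hi => by
          rw [if_pos (Finset.mem_range.mp hi), one_div_mul_eq_div]
      simp_rw [this]
      exact hfirst.symm
  calc (1:ℝ)/2 < 1 - (1 - p) ^ k := hsecond
    _ ≤ sSup S := le_csSup hbdd hmem
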